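/- For a finite dimensional $G$-graded $G$-module $H$, the reflection-duality identity $(b_i \cdot x)(v) = x(b_{n-i} \cdot v)$ holds for every standard braid generator $b_i$, every $x \in (H^*)^{\otimes n}$, and every $v \in H^{\otimes n}$, where the pairing reverses the order of factors: $(x_1\otimes\cdots\otimes x_n)(v_1\otimes\cdots\otimes v_n) = x_n(v_1)\cdots x_1(v_n)$. -/

import Mathlib

open scoped TensorProduct
open PiTensorProduct DirectSum

variable {k : Type*} [Field k] {G : Type*} [Group G] [Fintype G] [DecidableEq G]

/-- The projection onto the homogeneous component of degree `g` of a `G`-graded module. -/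
noncomputable def gradedProj {H : Type*} [AddCommGroup H] [Module k H]
    (𝒜 : G → Submodule k H) [DirectSum.Decomposition 𝒜] (g : G) : H →ₗ[k] H :=
  (𝒜 g).subtype ∘ₗ (DirectSum.component k G (fun g => ↥(𝒜 g)) g) ∘ₗ
    (DirectSum.decomposeLinearEquiv 𝒜).toLinearMap

/-- The action of the braid generator `b_{i+1}` on the `n`-th tensor power `H^{⊗n}`
(`n = m+1`) of a `G`-graded `G`-module `H` via the braiding of `G`-graded `G`-modules:
on a tensor whose `i`-th factor `v_g` is homogeneous of degree `g`, it sends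
`⋯ ⊗ v_g ⊗ w ⊗ ⋯` to `⋯ ⊗ (g · w) ⊗ v_g ⊗ ⋯`. -/
noncomputable def braidGen {m : ℕ} {H : Type*} [AddCommGroup H] [Module k H]
    (𝒜 : G → Submodule k H) [DirectSum.Decomposition 𝒜] (ρ : G → (H ≃ₗ[k] H))
    (i : Fin m) :
    (⨂[k] (_ : Fin (m + 1)), H) →ₗ[k] ⨂[k] (_ : Fin (m + 1)), H :=
  ∑ g : G,
    (PiTensorProduct.reindex k (fun _ : Fin (m + 1) => H)
        (Equiv.swap i.castSucc i.succ)).toLinearMap ∘ₗ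
      PiTensorProduct.map (fun j =>
        if j = i.castSucc then gradedProj 𝒜 g
        else if j = i.succ then (ρ g).toLinearMap
        else LinearMap.id)

/-- The dual grading on `H^*`: `(H^*)_m = (H_{m⁻¹})^*`. -/
def dualGrading {H : Type*} [AddCommGroup H] [Module k H]
    (𝒜 : G → Submodule k H) (mdeg : G) : Submodule k (Module.Dual k H) :=
  ⨅ (m' : G) (_ : m' ≠ mdeg⁻¹), (𝒜 m').dualAnnihilator

/-- The order-reversing pairing `(H^*)^{⊗n} → (H^{⊗n})^*`:
`(x_1 ⊗ ⋯ ⊗ x_n)(v_1 ⊗ ⋯ ⊗ v_n) = x_n(v_1) · x_{n-1}(v_2) ⋯ x_1(v_n)`. -/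
noncomputable def tensorPairing (n : ℕ) (H : Type*) [AddCommGroup H] [Module k H] :
    (⨂[k] (_ : Fin n), Module.Dual k H) →ₗ[k] (⨂[k] (_ : Fin n), H) →ₗ[k] k :=
  (LinearMap.llcomp k (⨂[k] (_ : Fin n), H) (⨂[k] (_ : Fin n), k) k
      (PiTensorProduct.lift (MultilinearMap.mkPiAlgebra k (Fin n) k))) ∘ₗ
    PiTensorProduct.piTensorHomMap ∘ₗ
      (PiTensorProduct.reindex k (fun _ : Fin n => Module.Dual k H) Fin.revPerm).toLinearMap


section Aux

variable {H : Type*} [AddCommGroup H] [Module k H]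

omit [Group G] [Fintype G] in
lemma gradedProj_apply (𝒜 : G → Submodule k H) [DirectSum.Decomposition 𝒜] (g : G) (v : H) :
    gradedProj 𝒜 g v = (DirectSum.decompose 𝒜 v g : H) := rfl

omit [Group G] [Fintype G] in
lemma gradedProj_of_mem_ne (𝒜 : G → Submodule k H) [DirectSum.Decomposition 𝒜] {g g' : G} {v : H}
    (h : v ∈ 𝒜 g) (hne : g ≠ g') : gradedProj 𝒜 g' v = 0 :=
  DirectSum.decompose_of_mem_ne 𝒜 h hne

omit [Group G] in
lemma sum_gradedProj (𝒜 : G → Submodule k H) [DirectSum.Decomposition 𝒜] (v : H) :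
    ∑ g : G, gradedProj 𝒜 g v = v := by
  classical
  have h1 : ∑ g : G, gradedProj 𝒜 g v = ∑ g ∈ (DirectSum.decompose 𝒜 v).support, ((DirectSum.decompose 𝒜 v) g : H) := by
    refine (Finset.sum_subset (Finset.subset_univ _) ?_).symm
    intro g _ hg
    simp only [DFinsupp.mem_support_toFun, ne_eq, not_not] at hg
    rw [gradedProj_apply, hg, Submodule.coe_zero]
  rw [h1, DirectSum.sum_support_decompose]

omit [Group G] in
lemma gradedProj_unique (𝒜 : G → Submodule k H) [DirectSum.Decomposition 𝒜]
    (p : G → (H →ₗ[k] H)) (hmem : ∀ g v, p g v ∈ 𝒜 g) (hsum : ∀ v, ∑ g : G, p g v = v)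
    (g : G) (v : H) : gradedProj 𝒜 g v = p g v := by
  classical
  have hdec : DirectSum.decompose 𝒜 v = ∑ g' : G, DirectSum.of (fun g' => ↥(𝒜 g')) g' ⟨p g' v, hmem g' v⟩ := by
    conv_lhs => rw [← hsum v]
    rw [show (DirectSum.decompose 𝒜 : H → ⨁ g, ↥(𝒜 g)) = DirectSum.decomposeAddEquiv 𝒜 from rfl,
      map_sum]
    refine Finset.sum_congr rfl fun g' _ => ?_
    exact DirectSum.decompose_of_mem 𝒜 (hmem g' v)
  rw [gradedProj_apply, hdec]
  rw [DFinsupp.finset_sum_apply]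
  rw [Finset.sum_eq_single g]
  · simp
  · intro g' _ hne; simp [DirectSum.of_eq_of_ne _ _ _ hne.symm]
  · simp

lemma comp_gradedProj_mem_dualGrading (𝒜 : G → Submodule k H) [DirectSum.Decomposition 𝒜]
    (g : G) (x : Module.Dual k H) :
    x ∘ₗ gradedProj 𝒜 g⁻¹ ∈ dualGrading 𝒜 g := by
  simp only [dualGrading, Submodule.mem_iInf]
  intro m' hne
  rw [Submodule.mem_dualAnnihilator]
  intro w hw
  simp [LinearMap.comp_apply, gradedProj_of_mem_ne 𝒜 hw hne]

lemma sum_comp_gradedProj (𝒜 : G → Submodule k H) [DirectSum.Decomposition 𝒜]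
    (x : Module.Dual k H) :
    ∑ g : G, x ∘ₗ gradedProj 𝒜 g⁻¹ = x := by
  ext v
  simp only [LinearMap.coe_sum, Finset.sum_apply, LinearMap.comp_apply]
  rw [← map_sum x,
    show (∑ g : G, gradedProj 𝒜 g⁻¹ v) = ∑ g : G, gradedProj 𝒜 g v from
      Equiv.sum_comp (Equiv.inv G) (fun g => gradedProj 𝒜 g v), sum_gradedProj]

lemma gradedProj_dualGrading (𝒜 : G → Submodule k H) [DirectSum.Decomposition 𝒜]
    [DirectSum.Decomposition (dualGrading 𝒜)] (g : G) (x : Module.Dual k H) (v : H) :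
    gradedProj (dualGrading 𝒜) g x v = x (gradedProj 𝒜 g⁻¹ v) := by
  have := gradedProj_unique (dualGrading 𝒜)
    (fun g => LinearMap.lcomp k k (gradedProj 𝒜 g⁻¹))
    (fun g x => comp_gradedProj_mem_dualGrading 𝒜 g x)
    (fun x => sum_comp_gradedProj 𝒜 x) g x
  rw [this]; rfl

omit [Group G] [Fintype G] in
lemma tensorPairing_tprod (n : ℕ) (x : Fin n → Module.Dual k H) (v : Fin n → H) :
    tensorPairing n H (tprod k x) (tprod k v) = ∏ j, x j.rev (v j) := by
  simp [tensorPairing, reindex_tprod]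

omit [Group G] in
lemma braidGen_tprod {m : ℕ} (𝒜 : G → Submodule k H) [DirectSum.Decomposition 𝒜]
    (ρ : G → (H ≃ₗ[k] H)) (i : Fin m) (v : Fin (m + 1) → H) :
    braidGen 𝒜 ρ i (tprod k v) = ∑ g : G, tprod k (fun j =>
      (if Equiv.swap i.castSucc i.succ j = i.castSucc then gradedProj 𝒜 g
        else if Equiv.swap i.castSucc i.succ j = i.succ then (ρ g).toLinearMap
        else LinearMap.id) (v (Equiv.swap i.castSucc i.succ j))) := by
  simp [braidGen, map_tprod, reindex_tprod]
  rfl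

end Aux

lemma key_tprod {m : ℕ} {H : Type*} [AddCommGroup H] [Module k H]
    (𝒜 : G → Submodule k H) [DirectSum.Decomposition 𝒜]
    [DirectSum.Decomposition (dualGrading 𝒜)]
    (ρ : G →* (H ≃ₗ[k] H)) (i : Fin m)
    (x : Fin (m + 1) → Module.Dual k H) (v : Fin (m + 1) → H) :
    tensorPairing (m + 1) H
        (braidGen (dualGrading 𝒜) (fun g => (ρ g⁻¹).dualMap) i (tprod k x)) (tprod k v) =
      tensorPairing (m + 1) H (tprod k x) (braidGen 𝒜 (fun g => ρ g) i.rev (tprod k v)) := by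
  rw [braidGen_tprod, braidGen_tprod, map_sum, LinearMap.sum_apply, map_sum]
  simp only [tensorPairing_tprod]
  have hr1 : (Fin.castSucc i.rev).rev = i.succ := by rw [Fin.rev_castSucc, Fin.rev_rev]
  have hr2 : (Fin.succ i.rev).rev = i.castSucc := by rw [Fin.rev_succ, Fin.rev_rev]
  have hne : i.castSucc ≠ i.succ := (Fin.castSucc_lt_succ (i := i)).ne
  have hne' : i.rev.castSucc ≠ i.rev.succ := (Fin.castSucc_lt_succ (i := i.rev)).ne
  refine Fintype.sum_equiv (Equiv.inv G) _ _ (fun h => ?_)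
  refine Fintype.prod_equiv (Equiv.swap i.rev.castSucc i.rev.succ) _ _ (fun j => ?_)
  rcases eq_or_ne j i.rev.castSucc with hj1 | hj1
  · subst hj1
    simp only [Equiv.swap_apply_left, Equiv.swap_apply_right, hr1, hr2, Equiv.inv_apply,
      if_pos rfl, if_neg hne.symm, if_neg hne'.symm]
    have := gradedProj_dualGrading 𝒜 h (x i.castSucc) (v i.rev.castSucc)
    simpa using this
  · rcases eq_or_ne j i.rev.succ with hj2 | hj2
    · subst hj2
      simp only [Equiv.swap_apply_left, Equiv.swap_apply_right, hr1, hr2, Equiv.inv_apply,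
        if_pos rfl, if_neg hne, if_neg hne.symm, if_neg hne', if_neg hne'.symm]
      simp
    · have h1 : j.rev ≠ i.castSucc := fun h => hj2 (by rw [← hr2] at h; exact Fin.rev_inj.mp h)
      have h2 : j.rev ≠ i.succ := fun h => hj1 (by rw [← hr1] at h; exact Fin.rev_inj.mp h)
      simp only [Equiv.swap_apply_of_ne_of_ne hj1 hj2, Equiv.swap_apply_of_ne_of_ne h1 h2,
        if_neg h1, if_neg h2, if_neg hj1, if_neg hj2, LinearMap.id_coe, id_eq]


/-- The reflection-duality identity: for every standard braid generator `b_i`,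
every `x ∈ (H^*)^{⊗n}` and every `v ∈ H^{⊗n}`, `(b_i · x)(v) = x(b_{n-i} · v)`,
where `(H^*)^{⊗n}` carries the braiding coming from the dual `G`-graded `G`-module
structure `(γ · x)(v) = x(γ⁻¹ · v)`, `(H^*)_m = (H_{m⁻¹})^*`, and the pairing reverses
the order of the factors. -/
theorem reflection_duality_identity {m : ℕ}
    {H : Type*} [AddCommGroup H] [Module k H] [FiniteDimensional k H]
    (𝒜 : G → Submodule k H) [DirectSum.Decomposition 𝒜]
    [DirectSum.Decomposition (dualGrading 𝒜)]
    (ρ : G →* (H ≃ₗ[k] H))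
    (hcompat : ∀ (γ mdeg : G), (𝒜 mdeg).map (ρ γ).toLinearMap = 𝒜 (γ * mdeg * γ⁻¹))
    (i : Fin m) (x : ⨂[k] (_ : Fin (m + 1)), Module.Dual k H)
    (v : ⨂[k] (_ : Fin (m + 1)), H) :
    tensorPairing (m + 1) H
        (braidGen (dualGrading 𝒜) (fun g => (ρ g⁻¹).dualMap) i x) v =
      tensorPairing (m + 1) H x (braidGen 𝒜 (fun g => ρ g) i.rev v) := by
  induction x using PiTensorProduct.induction_on with
  | smul_tprod r f =>
    induction v using PiTensorProduct.induction_on with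
    | smul_tprod s w =>
      simp only [map_smul, LinearMap.smul_apply, smul_eq_mul]
      rw [key_tprod 𝒜 ρ i f w]
    | add a b ha hb =>
      simp only [map_add, LinearMap.add_apply] at ha hb ⊢
      rw [ha, hb]
  | add a b ha hb =>
    simp only [map_add, LinearMap.add_apply] at ha hb ⊢
    rw [ha, hb]
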